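/- Let w be a positive non-decreasing weight function with diverging W and α_c(w) < ∞. For any 0 < δ < δ', liminf_{x→∞} W⁻¹(W(x)+δ') / W⁻¹(W(x)+δ) ≥ e^{(δ'-δ)/α_c(w)}. -/

import Mathlib

open MeasureTheory Filter Topology Set
open scoped ENNReal NNReal

noncomputable section

/-- Extension of a weight sequence to the reals: `w(t) = w(⌊t⌋)` (and `w 0` for `t < 0`). -/
def wext (w : ℕ → ℝ) (t : ℝ) : ℝ := w ⌊t⌋₊

/-- `W(t) = ∫₀ᵗ du / w(u)`. -/
def Wfun (v : ℝ → ℝ) (t : ℝ) : ℝ := ∫ u in (0:ℝ)..t, (v u)⁻¹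

/-- `I_α(w) = ∫₀^∞ dx / w(W⁻¹(W(x)+α))`, valued in `[0,∞]`. -/
def Ia (v : ℝ → ℝ) (Winv : ℝ → ℝ) (α : ℝ) : ℝ≥0∞ :=
  ∫⁻ x in Ioi (0:ℝ), ENNReal.ofReal (v (Winv (Wfun v x + α)))⁻¹

/-- The critical parameter `α_c(w) = inf {α ≥ 0 : I_α(w) < ∞} ∈ [0,∞]` (inf ∅ = ∞). -/
def alphac (v : ℝ → ℝ) (Winv : ℝ → ℝ) : ℝ≥0∞ :=
  sInf (ENNReal.ofReal '' {α : ℝ | 0 < α ∧ Ia v Winv α < ⊤})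

set_option maxHeartbeats 1600000

section StarAux

private lemma wm_mono {w : ℝ → ℝ} (hmono : MonotoneOn w (Ici (0:ℝ))) :
    Monotone (fun u => w (max u 0)) := by
  intro u v huv
  exact hmono (le_max_right u 0) (le_max_right v 0) (max_le_max huv le_rfl)

private lemma wm_pos {w : ℝ → ℝ} (hpos : ∀ x : ℝ, 0 ≤ x → 0 < w x) (u : ℝ) :
    0 < w (max u 0) := hpos _ (le_max_right u 0)

private lemma wm_ii {w : ℝ → ℝ} (hpos : ∀ x : ℝ, 0 ≤ x → 0 < w x)
    (hmono : MonotoneOn w (Ici (0:ℝ))) (a b : ℝ) :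
    IntervalIntegrable (fun u => (w (max u 0))⁻¹) volume a b := by
  have : Antitone (fun u => (w (max u 0))⁻¹) := fun u v huv =>
    inv_anti₀ (wm_pos hpos u) (wm_mono hmono huv)
  exact this.intervalIntegrable

private lemma Wfun_eq_wm {w : ℝ → ℝ} {t : ℝ} (ht : 0 ≤ t) :
    Wfun w t = ∫ u in (0:ℝ)..t, (w (max u 0))⁻¹ := by
  refine intervalIntegral.integral_congr fun u hu => ?_
  rw [uIcc_of_le ht] at hu
  simp [max_eq_left hu.1]

/-- The key two-sided estimate on increments of `W`. -/
private lemma star {w : ℝ → ℝ} (hpos : ∀ x : ℝ, 0 ≤ x → 0 < w x)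
    (hmono : MonotoneOn w (Ici (0:ℝ))) {t t' : ℝ} (ht : 0 ≤ t) (htt' : t ≤ t') :
    (t' - t) * (w t')⁻¹ ≤ Wfun w t' - Wfun w t ∧
      Wfun w t' - Wfun w t ≤ (t' - t) * (w t)⁻¹ := by
  have ht' : 0 ≤ t' := ht.trans htt'
  have hdiff : Wfun w t' - Wfun w t = ∫ u in t..t', (w (max u 0))⁻¹ := by
    rw [Wfun_eq_wm ht, Wfun_eq_wm ht',
      ← intervalIntegral.integral_add_adjacent_intervals (wm_ii hpos hmono 0 t)
        (wm_ii hpos hmono t t')]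
    ring
  have hlo : ∀ u ∈ Icc t t', (w t')⁻¹ ≤ (w (max u 0))⁻¹ := by
    intro u hu
    have := inv_anti₀ (wm_pos hpos u) (wm_mono hmono hu.2)
    simpa [max_eq_left ht'] using this
  have hhi : ∀ u ∈ Icc t t', (w (max u 0))⁻¹ ≤ (w t)⁻¹ := by
    intro u hu
    have := inv_anti₀ (wm_pos hpos t) (wm_mono hmono hu.1)
    simpa [max_eq_left ht] using this
  constructor
  · have := intervalIntegral.integral_mono_on htt'
      (intervalIntegrable_const (c := (w t')⁻¹)) (wm_ii hpos hmono t t') hlo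
    rw [intervalIntegral.integral_const] at this
    rw [hdiff]
    simpa [smul_eq_mul] using this
  · have := intervalIntegral.integral_mono_on htt'
      (wm_ii hpos hmono t t') (intervalIntegrable_const (c := (w t)⁻¹)) hhi
    rw [intervalIntegral.integral_const] at this
    rw [hdiff]
    simpa [smul_eq_mul] using this

end StarAux

private lemma Wfun_zero (w : ℝ → ℝ) : Wfun w 0 = 0 := intervalIntegral.integral_same

private lemma Wfun_mono {w : ℝ → ℝ} (hpos : ∀ x : ℝ, 0 ≤ x → 0 < w x)
    (hmono : MonotoneOn w (Ici (0:ℝ))) {t t' : ℝ} (ht : 0 ≤ t) (htt' : t ≤ t') :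
    Wfun w t ≤ Wfun w t' := by
  have h := (star hpos hmono ht htt').1
  have h0 : 0 ≤ (t' - t) * (w t')⁻¹ :=
    mul_nonneg (by linarith) (inv_nonneg.2 (hpos t' (ht.trans htt')).le)
  linarith

private lemma Wfun_nonneg {w : ℝ → ℝ} (hpos : ∀ x : ℝ, 0 ≤ x → 0 < w x)
    (hmono : MonotoneOn w (Ici (0:ℝ))) {t : ℝ} (ht : 0 ≤ t) : 0 ≤ Wfun w t := by
  have := Wfun_mono hpos hmono le_rfl ht
  rwa [Wfun_zero] at this

private lemma Wfun_surj {w : ℝ → ℝ} (hpos : ∀ x : ℝ, 0 ≤ x → 0 < w x)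
    (hmono : MonotoneOn w (Ici (0:ℝ))) (hWdiv : Tendsto (Wfun w) atTop atTop)
    {y : ℝ} (hy : 0 ≤ y) : ∃ t, 0 ≤ t ∧ Wfun w t = y := by
  obtain ⟨T₀, hT₀⟩ := eventually_atTop.1 (hWdiv.eventually_ge_atTop y)
  set T := max T₀ 0 with hT
  have hTnn : (0:ℝ) ≤ T := le_max_right _ _
  have hyT : y ≤ Wfun w T := hT₀ T (le_max_left _ _)
  have hcont : ContinuousOn (Wfun w) (Icc 0 T) := by
    have h1 : Continuous fun b => ∫ u in (0:ℝ)..b, (w (max u 0))⁻¹ :=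
      intervalIntegral.continuous_primitive (wm_ii hpos hmono) 0
    refine h1.continuousOn.congr fun t ht => ?_
    exact Wfun_eq_wm ht.1
  have := intermediate_value_Icc hTnn hcont
  rw [Wfun_zero] at this
  obtain ⟨t, htmem, htval⟩ := this ⟨hy, hyT⟩
  exact ⟨t, htmem.1, htval⟩

private lemma key (w : ℝ → ℝ) (hpos : ∀ x : ℝ, 0 ≤ x → 0 < w x)
    (hmono : MonotoneOn w (Ici (0:ℝ)))
    (hWdiv : Tendsto (Wfun w) atTop atTop)
    (Winv : ℝ → ℝ)
    (hWinv : ∀ t : ℝ, 0 ≤ t → Winv (Wfun w t) = t)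
    (hWinv' : ∀ y : ℝ, 0 ≤ y → Wfun w (Winv y) = y)
    (α β δ δ' : ℝ) (hα : 0 < α) (hαβ : α < β) (hIa : Ia w Winv α < ⊤)
    (hδ : 0 < δ) (hδδ' : δ < δ') :
    ENNReal.ofReal (Real.exp ((δ' - δ) / β)) ≤
      Filter.liminf
        (fun x : ℝ => ENNReal.ofReal (Winv (Wfun w x + δ') / Winv (Wfun w x + δ)))
        atTop := by
  have hβ : 0 < β := hα.trans hαβ
  -- Basic facts about F = Winv on [0, ∞)
  have hFnn : ∀ y : ℝ, 0 ≤ y → 0 ≤ Winv y := by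
    intro y hy
    obtain ⟨t, ht, hWt⟩ := Wfun_surj hpos hmono hWdiv hy
    rw [← hWt, hWinv t ht]; exact ht
  have hgpos : ∀ y : ℝ, 0 ≤ y → 0 < w (Winv y) := fun y hy => hpos _ (hFnn y hy)
  have hFstar : ∀ y y' : ℝ, 0 ≤ y → y ≤ y' →
      w (Winv y) * (y' - y) ≤ Winv y' - Winv y ∧
        Winv y' - Winv y ≤ w (Winv y') * (y' - y) := by
    intro y y' hy hyy'
    have hy' : 0 ≤ y' := hy.trans hyy'
    have ht : 0 ≤ Winv y := hFnn y hy
    have ht' : 0 ≤ Winv y' := hFnn y' hy'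
    have htt' : Winv y ≤ Winv y' := by
      by_contra hlt
      push_neg at hlt
      have h := (star hpos hmono ht' hlt.le).1
      rw [hWinv' y hy, hWinv' y' hy'] at h
      have hwpos : 0 < (w (Winv y))⁻¹ := inv_pos.2 (hgpos y hy)
      nlinarith [sub_pos.2 hlt]
    have h := star hpos hmono ht htt'
    rw [hWinv' y hy, hWinv' y' hy'] at h
    have hw : 0 < w (Winv y) := hgpos y hy
    have hw' : 0 < w (Winv y') := hgpos y' hy'
    constructor
    · have h2 : y' - y ≤ (Winv y' - Winv y) / w (Winv y) := by
        rw [div_eq_mul_inv]; exact h.2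
      have := (le_div_iff₀ hw).mp h2
      linarith
    · have h1 : (Winv y' - Winv y) / w (Winv y') ≤ y' - y := by
        rw [div_eq_mul_inv]; exact h.1
      have := (div_le_iff₀ hw').mp h1
      linarith
  have hFmono : ∀ y y' : ℝ, 0 ≤ y → y ≤ y' → Winv y ≤ Winv y' := by
    intro y y' hy hyy'
    have h := (hFstar y y' hy hyy').1
    nlinarith [hgpos y hy]
  have hgmono : ∀ y y' : ℝ, 0 ≤ y → y ≤ y' → w (Winv y) ≤ w (Winv y') := by
    intro y y' hy hyy'
    exact hmono (hFnn y hy) (hFnn y' (hy.trans hyy')) (hFmono y y' hy hyy')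
  have hF0 : Winv 0 = 0 := by
    have := hWinv 0 le_rfl; rwa [Wfun_zero] at this
  have hFge : ∀ M y : ℝ, 0 ≤ M → Wfun w M ≤ y → M ≤ Winv y := by
    intro M y hM hMy
    have h0 : 0 ≤ Wfun w M := Wfun_nonneg hpos hmono hM
    have := hFmono (Wfun w M) y h0 hMy
    rwa [hWinv M hM] at this
  -- the density measure
  set h : ℝ → ℝ≥0∞ := fun x => ENNReal.ofReal (w (Winv (Wfun w (max x 0) + α)))⁻¹ with hh
  have harg : ∀ x : ℝ, 0 ≤ Wfun w (max x 0) + α := by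
    intro x
    have := Wfun_nonneg hpos hmono (le_max_right x 0)
    linarith
  have hmeas : Measurable h := by
    have hmono2 : Monotone fun x : ℝ => w (Winv (Wfun w (max x 0) + α)) := by
      intro u v huv
      have h1 : Wfun w (max u 0) + α ≤ Wfun w (max v 0) + α := by
        have := Wfun_mono hpos hmono (le_max_right u 0) (max_le_max huv le_rfl)
        linarith
      exact hgmono _ _ (harg u) h1
    have hanti : Antitone fun x : ℝ => (w (Winv (Wfun w (max x 0) + α)))⁻¹ := fun u v huv =>
      inv_anti₀ (hgpos _ (harg u)) (hmono2 huv)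
    exact ENNReal.measurable_ofReal.comp hanti.measurable
  set ν : Measure ℝ := volume.withDensity h with hν
  have hνIa : ν (Ioi 0) = Ia w Winv α := by
    rw [hν, withDensity_apply _ measurableSet_Ioi]
    refine setLIntegral_congr_fun measurableSet_Ioi (fun x hx => ?_)
    rw [hh]
    simp only []
    rw [max_eq_left (le_of_lt hx)]
  have hνfin : ν (Ioi 0) < ⊤ := by rw [hνIa]; exact hIa
  have hνIoc : ∀ a b : ℝ, ν (Ioc a b) = ∫⁻ x in Ioc a b, h x := fun a b =>
    withDensity_apply _ measurableSet_Ioc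
  have hsupν : ν (Ioi 0) = ⨆ n : ℕ, ν (Ioc 0 (n : ℝ)) := by
    have hU : ⋃ n : ℕ, Ioc (0:ℝ) (n:ℝ) = Ioi 0 := by
      ext x
      simp only [mem_iUnion, mem_Ioc, mem_Ioi]
      constructor
      · rintro ⟨n, h1, _⟩; exact h1
      · intro hx
        obtain ⟨n, hn⟩ := exists_nat_ge x
        exact ⟨n, hx, hn⟩
    have hmonoS : Monotone fun n : ℕ => Ioc (0:ℝ) (n:ℝ) := fun m n hmn =>
      Ioc_subset_Ioc le_rfl (by exact_mod_cast hmn)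
    rw [← hU, hmonoS.measure_iUnion]
  -- Step (a): the one-step decay estimate
  have haux : ∀ γ : ℝ, α < γ → ∀ ε : ℝ, 0 < ε → ∃ y₀ : ℝ, 0 ≤ y₀ ∧
      ∀ y : ℝ, y₀ ≤ y → w (Winv y) ≤ ε * w (Winv (y + γ)) := by
    intro γ hγ ε hε
    have hη : (0:ℝ) < γ - α := by linarith
    have hc0 : (0:ℝ≥0∞) < ENNReal.ofReal (ε * (γ - α)) :=
      ENNReal.ofReal_pos.2 (by positivity)
    obtain ⟨n, hn⟩ : ∃ n : ℕ, ν (Ioi 0) < ν (Ioc 0 (n:ℝ)) + ENNReal.ofReal (ε * (γ - α)) := by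
      by_cases hle : ENNReal.ofReal (ε * (γ - α)) ≤ ν (Ioi 0)
      · have hν0 : ν (Ioi 0) ≠ 0 := by
          intro h0
          rw [h0] at hle
          exact absurd (le_antisymm hle (by positivity)) hc0.ne'
        have hlt : ν (Ioi 0) - ENNReal.ofReal (ε * (γ - α)) < ν (Ioi 0) :=
          ENNReal.sub_lt_self hνfin.ne hν0 hc0.ne'
        rw [hsupν] at hlt
        obtain ⟨n, hn⟩ := lt_iSup_iff.mp hlt
        refine ⟨n, ?_⟩
        rw [hsupν]
        exact (ENNReal.sub_lt_iff_lt_right ENNReal.ofReal_ne_top (hsupν ▸ hle)).mp hn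
      · push_neg at hle
        exact ⟨0, lt_of_lt_of_le hle le_add_self⟩
    refine ⟨max 0 (Wfun w (n:ℝ)), le_max_left _ _, fun y hy => ?_⟩
    have hy0 : (0:ℝ) ≤ y := le_trans (le_max_left _ _) hy
    have hFyn : (n:ℝ) ≤ Winv y := hFge _ _ n.cast_nonneg (le_trans (le_max_right _ _) hy)
    have hFynn : 0 ≤ Winv y := hFnn y hy0
    have hyη : y ≤ y + (γ - α) := by linarith
    have hyη0 : (0:ℝ) ≤ y + (γ - α) := by linarith
    set s : Set ℝ := Ioc (Winv y) (Winv (y + (γ - α))) with hs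
    have hsub : s ⊆ Ioi (0:ℝ) := fun x hx => lt_of_le_of_lt hFynn hx.1
    have hdisj : Disjoint (Ioc (0:ℝ) (n:ℝ)) s := by
      rw [Set.disjoint_left]
      intro x hx1 hx2
      have := hx2.1
      have := hx1.2
      linarith
    have hνs : ν s < ENNReal.ofReal (ε * (γ - α)) := by
      have h1 : ν (Ioc 0 (n:ℝ)) + ν s ≤ ν (Ioi 0) := by
        rw [← measure_union hdisj measurableSet_Ioc]
        exact measure_mono (union_subset Ioc_subset_Ioi_self hsub)
      have h2 := lt_of_le_of_lt h1 hn
      have h3 : ν (Ioc 0 (n:ℝ)) ≠ ⊤ :=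
        (lt_of_le_of_lt (measure_mono Ioc_subset_Ioi_self) hνfin).ne
      exact (ENNReal.add_lt_add_iff_left h3).mp h2
    have hwB : 0 < w (Winv (y + γ)) := hgpos _ (by linarith)
    have hwy : 0 < w (Winv y) := hgpos _ hy0
    have hlow : ENNReal.ofReal ((w (Winv (y + γ)))⁻¹) * ENNReal.ofReal (w (Winv y) * (γ - α))
        ≤ ν s := by
      have hb : ∀ x ∈ s, ENNReal.ofReal ((w (Winv (y + γ)))⁻¹) ≤ h x := by
        intro x hx
        have hx0 : 0 < x := hsub hx
        have hxW : Wfun w x + α ≤ y + γ := by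
          have h1 : Wfun w x ≤ Wfun w (Winv (y + (γ - α))) :=
            Wfun_mono hpos hmono hx0.le hx.2
          rw [hWinv' _ hyη0] at h1
          linarith
        have hxW0 : 0 ≤ Wfun w x + α := by
          have := Wfun_nonneg hpos hmono hx0.le
          linarith
        rw [hh]
        simp only []
        rw [max_eq_left hx0.le]
        exact ENNReal.ofReal_le_ofReal
          (inv_anti₀ (hgpos _ hxW0) (hgmono _ _ hxW0 hxW))
      calc ENNReal.ofReal ((w (Winv (y + γ)))⁻¹) * ENNReal.ofReal (w (Winv y) * (γ - α))
          ≤ ENNReal.ofReal ((w (Winv (y + γ)))⁻¹) * volume s := by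
            gcongr
            rw [hs, Real.volume_Ioc]
            apply ENNReal.ofReal_le_ofReal
            have := (hFstar y (y + (γ - α)) hy0 hyη).1
            linarith
        _ = ∫⁻ _ in s, ENNReal.ofReal ((w (Winv (y + γ)))⁻¹) ∂volume :=
            (setLIntegral_const s _).symm
        _ ≤ ∫⁻ x in s, h x ∂volume := setLIntegral_mono' measurableSet_Ioc hb
        _ = ν s := (withDensity_apply _ measurableSet_Ioc).symm
    have hcomb := lt_of_le_of_lt hlow hνs
    rw [← ENNReal.ofReal_mul (inv_nonneg.2 hwB.le)] at hcomb
    rw [ENNReal.ofReal_lt_ofReal_iff (by positivity)] at hcomb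
    have hkey := mul_lt_mul_of_pos_left hcomb hwB
    rw [← mul_assoc, mul_inv_cancel₀ hwB.ne', one_mul] at hkey
    nlinarith

  -- g tends to infinity
  have hgtop : ∀ C : ℝ, ∃ z₀ : ℝ, 0 ≤ z₀ ∧ ∀ z, z₀ ≤ z → C ≤ w (Winv z) := by
    obtain ⟨y₀, hy₀0, hy₀⟩ := haux β hαβ (1/2) (by norm_num)
    have hiter2 : ∀ k : ℕ, ∀ z : ℝ, y₀ + k * β ≤ z → 2 ^ k * w (Winv y₀) ≤ w (Winv z) := by
      intro k
      induction k with
      | zero =>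
        intro z hz
        push_cast at hz
        simpa using hgmono y₀ z hy₀0 (by linarith)
      | succ k ih =>
        intro z hz
        push_cast at hz
        have hk0 : (0:ℝ) ≤ (k:ℝ) := k.cast_nonneg
        have hz' : y₀ + (k:ℝ) * β ≤ z - β := by linarith
        have h1 := ih (z - β) (by push_cast; linarith)
        have h2 := hy₀ (z - β) (by nlinarith)
        rw [sub_add_cancel] at h2
        have h3 : 0 < w (Winv (z - β)) := hgpos _ (by nlinarith)
        rw [pow_succ]
        nlinarith
    intro C
    obtain ⟨k, hk⟩ := pow_unbounded_of_one_lt (C / w (Winv y₀)) (by norm_num : (1:ℝ) < 2)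
    refine ⟨y₀ + k * β, add_nonneg hy₀0 (by positivity), fun z hz => ?_⟩
    have h1 := hiter2 k z hz
    have h3 : 0 < w (Winv y₀) := hgpos _ hy₀0
    nlinarith [(div_lt_iff₀ h3).mp hk]
  -- Step (b) : F z ≤ β * g z eventually
  have hb : ∃ y₂ : ℝ, 0 ≤ y₂ ∧ ∀ z, y₂ ≤ z → Winv z ≤ β * w (Winv z) := by
    set βm := (α + β) / 2 with hβm
    have hαβm : α < βm := by rw [hβm]; linarith
    have hβm0 : 0 < βm := hα.trans hαβm
    have hβmβ : βm < β := by rw [hβm]; linarith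
    set ε' := (β - βm) / (β + βm) with hε'
    have hden : 0 < β + βm := by linarith
    have hε'0 : 0 < ε' := div_pos (by linarith) (by linarith)
    have hε'1 : ε' < 1 := by rw [hε', div_lt_one hden]; linarith
    obtain ⟨y₁, hy₁0, hy₁⟩ := haux βm hαβm ε' hε'0
    set q := (β + βm) / 2 with hq
    have hq0 : 0 < q := by rw [hq]; linarith
    have hqβ : q < β := by rw [hq]; linarith
    have hβmq : βm ≤ q := by rw [hq]; linarith
    have hqid : ε' * q + βm = q := by
      rw [hε', hq]
      field_simp
      ring
    have hind : ∀ n : ℕ, ∀ z : ℝ, y₁ ≤ z → z ≤ y₁ + n * βm →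
        Winv z ≤ Winv y₁ + q * w (Winv z) := by
      intro n
      induction n with
      | zero =>
        intro z hz1 hz2
        push_cast at hz2
        have hzz : z = y₁ := le_antisymm (by linarith) hz1
        subst hzz
        nlinarith [hgpos z (hy₁0.trans hz1)]
      | succ n ih =>
        intro z hz1 hz2
        push_cast at hz2
        have hz0 : (0:ℝ) ≤ z := hy₁0.trans hz1
        have hgz := hgpos z hz0
        by_cases hcase : z ≤ y₁ + βm
        · have h1 := (hFstar y₁ z hy₁0 hz1).2
          nlinarith
        · push_neg at hcase
          have hz1' : y₁ ≤ z - βm := by linarith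
          have hz2' : z - βm ≤ y₁ + n * βm := by push_cast; linarith
          have ih' := ih (z - βm) hz1' hz2'
          have h1 := (hFstar (z - βm) z (by linarith) (by linarith)).2
          have h2 := hy₁ (z - βm) hz1'
          rw [sub_add_cancel] at h2
          have hgzm := hgpos (z - βm) (by linarith)
          have hqid2 : (ε' * q + βm) * w (Winv z) = q * w (Winv z) := by rw [hqid]
          linarith [mul_le_mul_of_nonneg_left h2 hq0.le, hqid2]
    have hall : ∀ z, y₁ ≤ z → Winv z ≤ Winv y₁ + q * w (Winv z) := by
      intro z hz
      obtain ⟨n, hn⟩ := exists_nat_ge ((z - y₁) / βm)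
      refine hind n z hz ?_
      rw [div_le_iff₀ hβm0] at hn
      linarith
    obtain ⟨z₀, hz₀0, hz₀⟩ := hgtop (Winv y₁ / (β - q))
    refine ⟨max y₁ z₀, le_trans hy₁0 (le_max_left _ _), fun z hz => ?_⟩
    have h1 := hall z (le_trans (le_max_left _ _) hz)
    have h2 := hz₀ z (le_trans (le_max_right _ _) hz)
    have hgz := hgpos z (le_trans hz₀0 (le_trans (le_max_right _ _) hz))
    have hβq : 0 < β - q := by linarith
    rw [div_le_iff₀ hβq] at h2
    nlinarith [h1, h2]
  -- Step (c) : multiplicative growth of F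
  obtain ⟨y₂, hy₂0, hy₂⟩ := hb
  set y₃ := max y₂ 1 with hy₃
  have hy₃0 : (0:ℝ) ≤ y₃ := le_trans hy₂0 (le_max_left _ _)
  have hFy₃pos : ∀ z, y₃ ≤ z → 0 < Winv z := by
    intro z hz
    have h := (hFstar 0 1 le_rfl zero_le_one).1
    rw [hF0] at h
    have h2 : 0 < Winv 1 := by nlinarith [hpos 0 le_rfl]
    have h3 : Winv 1 ≤ Winv z := hFmono 1 z zero_le_one (le_trans (le_max_right _ _) hz)
    linarith
  have hstep : ∀ z h' : ℝ, y₃ ≤ z → 0 ≤ h' → (1 + h' / β) * Winv z ≤ Winv (z + h') := by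
    intro z h' hz hh'
    have hz0 : (0:ℝ) ≤ z := hy₃0.trans hz
    have h1 := (hFstar z (z + h') hz0 (by linarith)).1
    have h2 := hy₂ z (le_trans (le_max_left _ _) hz)
    have h4 : (0:ℝ) ≤ h' / β := by positivity
    have h5 : h' / β * Winv z ≤ h' / β * (β * w (Winv z)) := by
      apply mul_le_mul_of_nonneg_left h2 h4
    have h6 : h' / β * (β * w (Winv z)) = h' * w (Winv z) := by
      field_simp
    nlinarith
  have hiter : ∀ h' : ℝ, 0 ≤ h' → ∀ n : ℕ, ∀ z, y₃ ≤ z →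
      (1 + h' / β) ^ n * Winv z ≤ Winv (z + n * h') := by
    intro h' hh' n
    induction n with
    | zero => intro z hz; simp
    | succ n ih =>
      intro z hz
      have h1 := ih z hz
      have hn0 : (0:ℝ) ≤ (n:ℝ) := n.cast_nonneg
      have hzn : y₃ ≤ z + n * h' := by nlinarith
      have h2 := hstep (z + n * h') h' hzn hh'
      have hu : (0:ℝ) ≤ 1 + h' / β := by positivity
      push_cast
      calc (1 + h' / β) ^ (n + 1) * Winv z
          = (1 + h' / β) * ((1 + h' / β) ^ n * Winv z) := by ring
        _ ≤ (1 + h' / β) * Winv (z + n * h') := mul_le_mul_of_nonneg_left h1 hu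
        _ ≤ Winv (z + n * h' + h') := h2
        _ = Winv (z + ((n:ℝ) + 1) * h') := by ring_nf
  -- conclusion via liminf
  set c := δ' - δ with hc
  have hcpos : 0 < c := by linarith
  have hbnd : ∀ n : ℕ, ENNReal.ofReal ((1 + (c / β) / ((n:ℝ) + 1)) ^ (n + 1)) ≤
      Filter.liminf
        (fun x : ℝ => ENNReal.ofReal (Winv (Wfun w x + δ') / Winv (Wfun w x + δ)))
        atTop := by
    intro n
    refine le_liminf_of_le (by isBoundedDefault) ?_
    have hev : ∀ᶠ x : ℝ in atTop, y₃ ≤ Wfun w x + δ := by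
      filter_upwards [hWdiv.eventually (eventually_ge_atTop (y₃ - δ))] with x hx
      linarith
    filter_upwards [hev] with x hx
    have h0 : 0 < Winv (Wfun w x + δ) := hFy₃pos _ hx
    have hn1 : (0:ℝ) < (n:ℝ) + 1 := by positivity
    set h' := c / ((n:ℝ) + 1) with hh'def
    have hh' : 0 ≤ h' := by positivity
    have hit := hiter h' hh' (n + 1) (Wfun w x + δ) hx
    have hz' : Wfun w x + δ + ((n + 1 : ℕ):ℝ) * h' = Wfun w x + δ' := by
      push_cast
      rw [hh'def]
      field_simp
      ring
    rw [hz'] at hit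
    apply ENNReal.ofReal_le_ofReal
    rw [le_div_iff₀ h0]
    have hrw : h' / β = (c / β) / ((n:ℝ) + 1) := by
      rw [hh'def, div_div, div_div, mul_comm]
    rw [hrw] at hit
    push_cast at hit
    linarith [hit]
  have htend : Tendsto (fun n : ℕ => ENNReal.ofReal ((1 + (c / β) / ((n:ℝ) + 1)) ^ (n + 1)))
      atTop (𝓝 (ENNReal.ofReal (Real.exp (c / β)))) := by
    apply (ENNReal.continuous_ofReal.tendsto _).comp
    have h1 := (Real.tendsto_one_add_div_pow_exp (c / β)).comp (tendsto_add_atTop_nat 1)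
    refine h1.congr fun n => ?_
    simp only [Function.comp]
    push_cast
    ring_nf
  exact le_of_tendsto' htend hbnd

/-- if `α_c(w) < ∞`, then for `0 < δ < δ'`,
`liminf_{x→∞} W⁻¹(W(x)+δ')/W⁻¹(W(x)+δ) ≥ e^{(δ'-δ)/α_c(w)}` (the RHS being `∞` when
`α_c(w) = 0`). -/
theorem stmt12 (w : ℝ → ℝ) (hpos : ∀ x : ℝ, 0 ≤ x → 0 < w x)
    (hmono : MonotoneOn w (Ici (0:ℝ)))
    (hWdiv : Tendsto (Wfun w) atTop atTop)
    (Winv : ℝ → ℝ)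
    (hWinv : ∀ t : ℝ, 0 ≤ t → Winv (Wfun w t) = t)
    (hWinv' : ∀ y : ℝ, 0 ≤ y → Wfun w (Winv y) = y)
    (hfin : alphac w Winv < ⊤)
    (δ δ' : ℝ) (hδ : 0 < δ) (hδδ' : δ < δ') :
    (if alphac w Winv = 0 then ⊤
      else ENNReal.ofReal (Real.exp ((δ' - δ) / (alphac w Winv).toReal)))
      ≤ Filter.liminf
          (fun x : ℝ => ENNReal.ofReal (Winv (Wfun w x + δ') / Winv (Wfun w x + δ)))
          atTop := by
  set c := δ' - δ with hc
  have hcpos : 0 < c := by rw [hc]; linarith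
  set L := Filter.liminf
      (fun x : ℝ => ENNReal.ofReal (Winv (Wfun w x + δ') / Winv (Wfun w x + δ)))
      atTop with hL
  by_cases h0 : alphac w Winv = 0
  · rw [if_pos h0]
    have hstep : ∀ n : ℕ, ENNReal.ofReal (Real.exp (c * ((n:ℝ) + 1))) ≤ L := by
      intro n
      have hβpos : (0:ℝ) < (((n:ℝ) + 1))⁻¹ := by positivity
      have hlt : alphac w Winv < ENNReal.ofReal ((((n:ℝ) + 1))⁻¹) := by
        rw [h0]
        exact ENNReal.ofReal_pos.2 hβpos
      rw [alphac] at hlt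
      obtain ⟨b, hbmem, hblt⟩ := sInf_lt_iff.mp hlt
      obtain ⟨a, ⟨ha0, haI⟩, rfl⟩ := hbmem
      have haβ : a < (((n:ℝ) + 1))⁻¹ := by
        rwa [ENNReal.ofReal_lt_ofReal_iff hβpos] at hblt
      have hk := key w hpos hmono hWdiv Winv hWinv hWinv' a ((((n:ℝ) + 1))⁻¹) δ δ'
        ha0 haβ haI hδ hδδ'
      rw [div_eq_mul_inv, inv_inv, ← hc] at hk
      exact hk
    have htend : Tendsto (fun n : ℕ => ENNReal.ofReal (Real.exp (c * ((n:ℝ) + 1)))) atTop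
        (𝓝 ⊤) := by
      apply ENNReal.tendsto_ofReal_atTop.comp
      apply Real.tendsto_exp_atTop.comp
      apply Tendsto.const_mul_atTop hcpos
      exact tendsto_atTop_add_const_right _ 1 tendsto_natCast_atTop_atTop
    exact le_of_tendsto' htend hstep
  · rw [if_neg h0]
    have hfin' : alphac w Winv ≠ ⊤ := hfin.ne
    set A := (alphac w Winv).toReal with hA
    have hApos : 0 < A := ENNReal.toReal_pos h0 hfin'
    have hstep : ∀ n : ℕ, ENNReal.ofReal (Real.exp (c / (A + ((n:ℝ) + 1)⁻¹))) ≤ L := by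
      intro n
      have hεpos : (0:ℝ) < ((n:ℝ) + 1)⁻¹ := by positivity
      have hlt : alphac w Winv < ENNReal.ofReal (A + ((n:ℝ) + 1)⁻¹) := by
        conv_lhs => rw [← ENNReal.ofReal_toReal hfin']
        rw [ENNReal.ofReal_lt_ofReal_iff (by positivity)]
        rw [← hA]
        linarith
      rw [alphac] at hlt
      obtain ⟨b, hbmem, hblt⟩ := sInf_lt_iff.mp hlt
      obtain ⟨a, ⟨ha0, haI⟩, rfl⟩ := hbmem
      have haβ : a < A + ((n:ℝ) + 1)⁻¹ := by
        rwa [ENNReal.ofReal_lt_ofReal_iff (by positivity)] at hblt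
      have hk := key w hpos hmono hWdiv Winv hWinv hWinv' a (A + ((n:ℝ) + 1)⁻¹) δ δ'
        ha0 haβ haI hδ hδδ'
      rw [← hc] at hk
      exact hk
    have htend : Tendsto (fun n : ℕ => ENNReal.ofReal (Real.exp (c / (A + ((n:ℝ) + 1)⁻¹))))
        atTop (𝓝 (ENNReal.ofReal (Real.exp (c / A)))) := by
      apply (ENNReal.continuous_ofReal.tendsto _).comp
      apply (Real.continuous_exp.tendsto _).comp
      have h1 : Tendsto (fun n : ℕ => A + ((n:ℝ) + 1)⁻¹) atTop (𝓝 A) := by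
        have h2 := tendsto_one_div_add_atTop_nhds_zero_nat (𝕜 := ℝ)
        have h3 := tendsto_const_nhds.add h2 (f := fun _ : ℕ => A) (x := atTop)
        simpa [one_div] using h3
      exact tendsto_const_nhds.div h1 hApos.ne'
    exact le_of_tendsto' htend hstep
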